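/- Let μ = (1/n) Σ_i δ_{x_i} and F⁰(μ) = ½ ∬ exp(c(x, y)) dμ(x) dμ(y) viewed as a function E(x_1, …, x_n) = (1/(2n²)) Σ_{i,j} exp(c(x_i, x_j)) of the particle positions, with c(x, y) = xᵀ B y and B symmetric, W_V = −B. Then the gradient of E with respect to x_i equals −(1/n²) Σ_j exp(c(x_i, x_j)) W_V x_j; i.e., the unnormalized attention update x_i ← x_i + (1/n) Σ_j K⁰_{ij} W_V x_j is (up to the factor 1/n) a gradient ascent step on −E. -/

import Mathlib

open RealInnerProductSpace Finset

section Aux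

variable {F : Type*} [NormedAddCommGroup F] [InnerProductSpace ℝ F]

lemma inner_right_clm_hasFDerivAt' (w z : F) :
    HasFDerivAt (fun z : F => (⟪z, w⟫ : ℝ)) (innerSL ℝ w) z := by
  have : (fun z : F => (⟪z, w⟫ : ℝ)) = fun z => innerSL ℝ w z := by
    funext z; exact (real_inner_comm z w).symm
  rw [this]
  exact (innerSL ℝ w).hasFDerivAt

lemma inner_left_clm_hasFDerivAt' (B : F →L[ℝ] F)
    (hB : ∀ u v : F, ⟪B u, v⟫ = ⟪u, B v⟫) (w z : F) :
    HasFDerivAt (fun z : F => (⟪w, B z⟫ : ℝ)) (innerSL ℝ (B w)) z := by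
  have : (fun z : F => (⟪w, B z⟫ : ℝ)) = fun z => innerSL ℝ (B w) z := by
    funext z
    rw [innerSL_apply_apply, ← hB]
  rw [this]
  exact (innerSL ℝ (B w)).hasFDerivAt

lemma quad_hasFDerivAt' (B : F →L[ℝ] F)
    (hB : ∀ u v : F, ⟪B u, v⟫ = ⟪u, B v⟫) (z : F) :
    HasFDerivAt (fun z : F => (⟪z, B z⟫ : ℝ)) (innerSL ℝ (B z + B z)) z := by
  have h1 := (hasFDerivAt_id (𝕜 := ℝ) z).inner ℝ (B.hasFDerivAt (x := z))
  refine h1.congr_fderiv (Eq.symm ?_)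
  refine ContinuousLinearMap.ext fun h => ?_
  simp only [innerSL_apply_apply, ContinuousLinearMap.coe_comp', Function.comp_apply,
    ContinuousLinearMap.prod_apply, fderivInnerCLM_apply,
    ContinuousLinearMap.coe_id', id_eq]
  rw [inner_add_left, hB, real_inner_comm (B z) h, ← hB]

variable [CompleteSpace F]

lemma energy_gradient_aux {n : ℕ}
    (B WV : F →L[ℝ] F)
    (hB : ∀ u v : F, ⟪B u, v⟫ = ⟪u, B v⟫)
    (hWV : ∀ v, WV v = -B v)
    (x : Fin n → F) (k : Fin n) :
    gradient (fun z => (1 / (2 * (n : ℝ) ^ 2)) *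
        ∑ i, ∑ j, Real.exp ⟪Function.update x k z i, B (Function.update x k z j)⟫) (x k) =
      -∑ j, ((1 / (n : ℝ) ^ 2) * Real.exp ⟪x k, B (x j)⟫) • WV (x j) := by
  classical
  set e : Fin n → Fin n → ℝ := fun i j => Real.exp ⟪x i, B (x j)⟫ with he
  have esymm : ∀ i j, e i j = e j i := by
    intro i j
    simp only [he]
    rw [← hB, real_inner_comm]
  -- derivative of each term
  have hterm : ∀ i j : Fin n, HasFDerivAt
      (fun z => Real.exp ⟪Function.update x k z i, B (Function.update x k z j)⟫)
      (e i j • innerSL ℝ ((if i = k then B (x j) else 0) + (if j = k then B (x i) else 0)))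
      (x k) := by
    intro i j
    by_cases hik : i = k <;> by_cases hjk : j = k
    · subst hik
      subst hjk
      simp only [Function.update_self, if_pos rfl, he]
      exact (quad_hasFDerivAt' B hB _).exp
    · subst hik
      simp only [Function.update_self, Function.update_of_ne hjk, if_pos rfl, if_neg hjk,
        add_zero, he]
      exact (inner_right_clm_hasFDerivAt' (B (x j)) _).exp
    · subst hjk
      simp only [Function.update_self, Function.update_of_ne hik, if_neg hik, if_pos rfl,
        zero_add, he]
      exact (inner_left_clm_hasFDerivAt' B hB (x i) _).exp
    · simp only [Function.update_of_ne hik, Function.update_of_ne hjk, if_neg hik,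
        if_neg hjk, add_zero, map_zero, smul_zero]
      exact hasFDerivAt_const (Real.exp ⟪x i, B (x j)⟫) (x k)
  -- total derivative
  have hsum : HasFDerivAt
      (fun z => (1 / (2 * (n : ℝ) ^ 2)) *
        ∑ i, ∑ j, Real.exp ⟪Function.update x k z i, B (Function.update x k z j)⟫)
      ((1 / (2 * (n : ℝ) ^ 2)) • ∑ i, ∑ j,
        e i j • innerSL ℝ ((if i = k then B (x j) else 0) + (if j = k then B (x i) else 0)))
      (x k) := by
    refine HasFDerivAt.const_mul ?_ _
    exact HasFDerivAt.fun_sum fun i _ => HasFDerivAt.fun_sum fun j _ => hterm i j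
  have hgrad : HasGradientAt
      (fun z => (1 / (2 * (n : ℝ) ^ 2)) *
        ∑ i, ∑ j, Real.exp ⟪Function.update x k z i, B (Function.update x k z j)⟫)
      (-∑ j, ((1 / (n : ℝ) ^ 2) * Real.exp ⟪x k, B (x j)⟫) • WV (x j)) (x k) := by
    rw [hasGradientAt_iff_hasFDerivAt]
    refine hsum.congr_fderiv (Eq.symm ?_)
    refine ContinuousLinearMap.ext fun h => ?_
    simp only [InnerProductSpace.toDual_apply_apply, ContinuousLinearMap.smul_apply,
      ContinuousLinearMap.sum_apply, innerSL_apply_apply, smul_eq_mul]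
    rw [inner_neg_left, sum_inner]
    have key : ∀ i j : Fin n,
        e i j * ⟪(if i = k then B (x j) else 0) + (if j = k then B (x i) else 0), h⟫
        = (if i = k then e i j * ⟪B (x j), h⟫ else 0)
          + (if j = k then e i j * ⟪B (x i), h⟫ else 0) := by
      intro i j
      rw [inner_add_left]
      split_ifs <;> simp [mul_add]
    simp only [key, Finset.sum_add_distrib]
    rw [Finset.sum_comm (s := (univ : Finset (Fin n))) (t := (univ : Finset (Fin n)))
      (f := fun i j => if i = k then e i j * ⟪B (x j), h⟫ else 0)]
    simp only [Finset.sum_ite_eq', Finset.mem_univ, if_true, inner_smul_left,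
      RCLike.conj_to_real, conj_trivial]
    have hek : ∀ j, e j k = e k j := fun j => esymm j k
    simp only [hek, hWV, inner_neg_left, he]
    rcases Nat.eq_zero_or_pos n with hn | hn
    · subst hn; simp
    have hn' : (n : ℝ) ≠ 0 := Nat.cast_ne_zero.mpr hn.ne'
    simp only [mul_neg, neg_neg, ← Finset.sum_add_distrib, Finset.mul_sum,
      ← Finset.sum_neg_distrib]
    refine Finset.sum_congr rfl fun j _ => ?_
    rw [show (⟪x j, B (x k)⟫ : ℝ) = ⟪x k, B (x j)⟫ by rw [← hB, real_inner_comm]]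
    field_simp
    ring
  exact hgrad.gradient

end Aux

/-- Gradient of the interaction energy `E(x₁,…,xₙ) = (1/(2n²)) Σ_{i,j} exp(x_iᵀ B x_j)`
with respect to the `k`-th particle: the unnormalized attention update with `W_V = −B`
is a gradient descent step on `E`. -/
theorem energy_gradient_unnormalized_attention {d n : ℕ}
    (B WV : EuclideanSpace ℝ (Fin d) →L[ℝ] EuclideanSpace ℝ (Fin d))
    (hB : ∀ u v : EuclideanSpace ℝ (Fin d), ⟪B u, v⟫ = ⟪u, B v⟫)
    (hWV : ∀ v, WV v = -B v)
    (x : Fin n → EuclideanSpace ℝ (Fin d)) (k : Fin n) :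
    gradient (fun z => (1 / (2 * (n : ℝ) ^ 2)) *
        ∑ i, ∑ j, Real.exp ⟪Function.update x k z i, B (Function.update x k z j)⟫) (x k) =
      -∑ j, ((1 / (n : ℝ) ^ 2) * Real.exp ⟪x k, B (x j)⟫) • WV (x j) := by
  exact energy_gradient_aux B WV hB hWV x k
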